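/- Conditional excess-distortion identity: R_X^c(d,ε) = R_X^{c,+}(d,ε), where R_X^c(d,ε) = inf over kernels P_{Y|X} with P(d(X,Y) > d | X=x) ≤ ε for all x in the support of P_X of I(X;Y), and R_X^{c,+}(d,ε) = inf over distributions Q on Y of E[ d(α_Q(X) ‖ Q(B_d(X))) ] with α_Q(x) = max{1-ε, Q(B_d(x))}. -/

import Mathlib

noncomputable section

/-- `q` is a probability mass function on the finite alphabet `α`. -/
def isPMF {α : Type*} [Fintype α] (q : α → ℝ) : Prop :=
  (∀ a, 0 ≤ q a) ∧ ∑ a, q a = 1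

/-- Shannon entropy (in bits) of a pmf on a finite alphabet. -/
def ent {α : Type*} [Fintype α] (q : α → ℝ) : ℝ :=
  ∑ a, -(q a * Real.logb 2 (q a))

/-- Relative entropy (Kullback–Leibler divergence, in bits) between pmfs. -/
def klDiv {α : Type*} [Fintype α] (μ ν : α → ℝ) : ℝ :=
  ∑ a, μ a * Real.logb 2 (μ a / ν a)

/-- Probability, under `Q`, of the distortion-`D` ball around `x`:
`Q(B_D(x)) = Q {y : df x y ≤ D}`. -/
def probBall {X Y : Type*} [Fintype Y] (Q : Y → ℝ) (df : X → Y → ℝ) (D : ℝ) (x : X) : ℝ :=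
  ∑ y, if df x y ≤ D then Q y else 0

/-- Output marginal `P_Y` induced by input pmf `p` and kernel `K`. -/
def marg {X Y : Type*} [Fintype X] [Fintype Y] (p : X → ℝ) (K : X → Y → ℝ) : Y → ℝ :=
  fun y => ∑ x, p x * K x y

/-- Mutual information (in bits) `I(X;Y)` of the joint law `p ⊗ K`,
written as `E_X [ D(K(X) ‖ P_Y) ]`. -/
def mutInfo {X Y : Type*} [Fintype X] [Fintype Y] (p : X → ℝ) (K : X → Y → ℝ) : ℝ :=
  ∑ x, p x * klDiv (K x) (marg p K)

/-- Binary relative entropy `d(α‖q)` (in bits). -/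
def bdiv (a q : ℝ) : ℝ :=
  a * Real.logb 2 (a / q) + (1 - a) * Real.logb 2 ((1 - a) / (1 - q))

/-- Log-sum inequality (in base 2, with Lean's `log 0 = 0`, `x/0 = 0` conventions),
valid under absolute continuity. -/
lemma my_logsum {ι : Type*} (s : Finset ι) (a b : ι → ℝ)
    (ha : ∀ i ∈ s, 0 ≤ a i) (hb : ∀ i ∈ s, 0 ≤ b i)
    (hab : ∀ i ∈ s, b i = 0 → a i = 0) :
    (∑ i ∈ s, a i) * Real.logb 2 ((∑ i ∈ s, a i) / (∑ i ∈ s, b i)) ≤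
      ∑ i ∈ s, a i * Real.logb 2 (a i / b i) := by
  have hlog2 : (0:ℝ) < Real.log 2 := Real.log_pos (by norm_num)
  set A := ∑ i ∈ s, a i with hA
  set B := ∑ i ∈ s, b i with hB
  rcases (Finset.sum_nonneg ha).eq_or_lt with h0 | hApos
  · -- A = 0
    have hz : ∀ i ∈ s, a i = 0 := by
      intro i hi
      exact (Finset.sum_eq_zero_iff_of_nonneg ha).1 h0.symm i hi
    have : A = 0 := h0.symm
    rw [this, zero_mul]
    rw [Finset.sum_congr rfl (fun i hi => by rw [hz i hi, zero_mul])]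
    simp
  · have hBpos : 0 < B := by
      rcases (Finset.sum_nonneg hb).eq_or_lt with h0' | h
      · exfalso
        have hz : ∀ i ∈ s, b i = 0 := by
          intro i hi
          exact (Finset.sum_eq_zero_iff_of_nonneg hb).1 h0'.symm i hi
        have : A = 0 := Finset.sum_eq_zero (fun i hi => hab i hi (hz i hi))
        linarith
      · exact h
    -- log-scale per-term inequality
    have key : ∀ i ∈ s,
        a i * Real.log (A / B) + (a i - b i * (A / B)) ≤ a i * Real.log (a i / b i) := by
      intro i hi
      rcases (ha i hi).eq_or_lt with ha0 | hai
      · rw [← ha0]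
        have : 0 ≤ b i * (A / B) := mul_nonneg (hb i hi) (by positivity)
        simp only [zero_mul, zero_sub, zero_add]
        linarith
      · have hbi : 0 < b i := by
          rcases (hb i hi).eq_or_lt with h | h
          · exact absurd (hab i hi h.symm) (ne_of_gt hai)
          · exact h
        have hpos : (0:ℝ) < (A / B) / (a i / b i) := by positivity
        have h1 : Real.log ((A / B) / (a i / b i)) ≤ (A / B) / (a i / b i) - 1 :=
          Real.log_le_sub_one_of_pos hpos
        have h2 : Real.log ((A / B) / (a i / b i)) =
            Real.log (A / B) - Real.log (a i / b i) :=
          Real.log_div (by positivity) (by positivity)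
        have h3 : a i * (Real.log (A / B) - Real.log (a i / b i)) ≤
            a i * ((A / B) / (a i / b i) - 1) :=
          mul_le_mul_of_nonneg_left (h2 ▸ h1) hai.le
        have h4 : a i * ((A / B) / (a i / b i) - 1) = b i * (A / B) - a i := by
          field_simp
        rw [h4] at h3
        rw [mul_sub] at h3
        linarith
    have hsum := Finset.sum_le_sum key
    have hL : ∑ i ∈ s, (a i * Real.log (A / B) + (a i - b i * (A / B))) =
        A * Real.log (A / B) := by
      rw [Finset.sum_add_distrib, Finset.sum_sub_distrib, ← Finset.sum_mul,
        ← Finset.sum_mul, ← hA, ← hB]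
      field_simp
      ring
    rw [hL] at hsum
    -- convert to logb
    simp only [Real.logb]
    calc A * (Real.log (A / B) / Real.log 2) = (A * Real.log (A / B)) / Real.log 2 := by
          ring
      _ ≤ (∑ i ∈ s, a i * Real.log (a i / b i)) / Real.log 2 := by gcongr
      _ = ∑ i ∈ s, a i * (Real.log (a i / b i) / Real.log 2) := by
          rw [Finset.sum_div]
          exact Finset.sum_congr rfl fun i _ => mul_div_assoc _ _ _

/-- Gibbs' inequality. -/
lemma my_klDiv_nonneg {α : Type*} [Fintype α] (μ ν : α → ℝ)
    (hμ : isPMF μ) (hν : isPMF ν) (hac : ∀ a, ν a = 0 → μ a = 0) :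
    0 ≤ klDiv μ ν := by
  have h := my_logsum Finset.univ μ ν (fun i _ => hμ.1 i) (fun i _ => hν.1 i)
    (fun i _ => hac i)
  rw [hμ.2, hν.2] at h
  simpa [klDiv] using h

lemma probBall_eq_sum {X Y : Type*} [Fintype Y] (Q : Y → ℝ) (df : X → Y → ℝ) (D : ℝ) (x : X) :
    probBall Q df D x = ∑ y ∈ Finset.univ.filter (fun y => df x y ≤ D), Q y := by
  rw [probBall, Finset.sum_filter]

lemma probBall_nonneg {X Y : Type*} [Fintype Y] (Q : Y → ℝ) (hQ : ∀ y, 0 ≤ Q y)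
    (df : X → Y → ℝ) (D : ℝ) (x : X) : 0 ≤ probBall Q df D x := by
  rw [probBall_eq_sum]; exact Finset.sum_nonneg fun y _ => hQ y

lemma probBall_le_one {X Y : Type*} [Fintype Y] (Q : Y → ℝ) (hQ : isPMF Q)
    (df : X → Y → ℝ) (D : ℝ) (x : X) : probBall Q df D x ≤ 1 := by
  rw [probBall_eq_sum, ← hQ.2]
  exact Finset.sum_le_sum_of_subset_of_nonneg (Finset.subset_univ _)
    (fun y _ _ => hQ.1 y)

/-- Data processing to the binary partition given by the distortion ball. -/
lemma my_klDiv_ge_bdiv {X Y : Type*} [Fintype Y] (μ ν : Y → ℝ)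
    (hμ : isPMF μ) (hν : isPMF ν) (hac : ∀ y, ν y = 0 → μ y = 0)
    (df : X → Y → ℝ) (D : ℝ) (x : X) :
    bdiv (probBall μ df D x) (probBall ν df D x) ≤ klDiv μ ν := by
  set s₁ := Finset.univ.filter (fun y => df x y ≤ D) with hs₁
  set s₂ := Finset.univ.filter (fun y => ¬ df x y ≤ D) with hs₂
  have hμ1 : probBall μ df D x = ∑ y ∈ s₁, μ y := probBall_eq_sum μ df D x
  have hν1 : probBall ν df D x = ∑ y ∈ s₁, ν y := probBall_eq_sum ν df D x
  have hμsplit : ∑ y ∈ s₁, μ y + ∑ y ∈ s₂, μ y = 1 := by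
    rw [hs₁, hs₂, Finset.sum_filter_add_sum_filter_not]; exact hμ.2
  have hνsplit : ∑ y ∈ s₁, ν y + ∑ y ∈ s₂, ν y = 1 := by
    rw [hs₁, hs₂, Finset.sum_filter_add_sum_filter_not]; exact hν.2
  have hkl : klDiv μ ν = (∑ y ∈ s₁, μ y * Real.logb 2 (μ y / ν y)) +
      (∑ y ∈ s₂, μ y * Real.logb 2 (μ y / ν y)) := by
    rw [klDiv, hs₁, hs₂, Finset.sum_filter_add_sum_filter_not]
  have h1 := my_logsum s₁ μ ν (fun i _ => hμ.1 i) (fun i _ => hν.1 i) (fun i _ => hac i)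
  have h2 := my_logsum s₂ μ ν (fun i _ => hμ.1 i) (fun i _ => hν.1 i) (fun i _ => hac i)
  have hμ2 : ∑ y ∈ s₂, μ y = 1 - probBall μ df D x := by rw [hμ1]; linarith
  have hν2 : ∑ y ∈ s₂, ν y = 1 - probBall ν df D x := by rw [hν1]; linarith
  rw [hμ2, hν2] at h2
  rw [← hμ1, ← hν1] at h1
  rw [hkl, bdiv]
  linarith

/-- Binary Gibbs. -/
lemma my_bdiv_nonneg {a q : ℝ} (ha0 : 0 ≤ a) (ha1 : a ≤ 1) (hq0 : 0 < q)
    (hq1 : q ≤ 1) (h : q = 1 → a = 1) : 0 ≤ bdiv a q := by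
  have h := my_logsum (Finset.univ : Finset Bool)
    (fun i => if i then a else 1 - a) (fun i => if i then q else 1 - q)
    (by intro i _; cases i <;> simp <;> linarith)
    (by intro i _; cases i <;> simp <;> linarith)
    (by intro i _; cases i <;> simp
        · intro h1; linarith [h (by linarith)]
        · intro h1; linarith)
  simp only [Fintype.sum_bool] at h
  norm_num at h
  rw [bdiv]
  linarith

lemma my_bdiv_self {q : ℝ} (hq0 : 0 < q) : bdiv q q = 0 := by
  rcases eq_or_ne q 1 with h | h
  · simp [bdiv, h]
  · rw [bdiv, div_self (ne_of_gt hq0), div_self (by intro hc; apply h; linarith : (1:ℝ) - q ≠ 0)]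
    simp

/-- Representation of `bdiv` in natural-log scale. -/
lemma my_bdiv_eq {q : ℝ} (hq0 : 0 < q) (hq1 : q < 1) {z : ℝ} (hz0 : 0 ≤ z) (hz1 : z ≤ 1) :
    bdiv z q = (z * Real.log z + (1 - z) * Real.log (1 - z)
      - z * Real.log q - (1 - z) * Real.log (1 - q)) / Real.log 2 := by
  have hlog2 : Real.log 2 ≠ 0 := ne_of_gt (Real.log_pos (by norm_num))
  rcases hz0.eq_or_lt with h0 | hzpos
  · rw [← h0]
    rw [bdiv]
    simp only [zero_mul, zero_div, Real.logb, Real.log_zero, sub_zero, mul_zero, zero_add,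
      zero_sub]
    rw [Real.log_div (by norm_num) (by linarith : (1:ℝ) - q ≠ 0)]
    simp [Real.log_one]
  rcases hz1.eq_or_lt with h1 | hzlt
  · rw [h1]
    rw [bdiv]
    simp only [sub_self, zero_mul, zero_div, Real.logb, Real.log_zero, mul_zero, add_zero,
      Real.log_one]
    rw [Real.log_div (by norm_num) (ne_of_gt hq0)]
    simp [Real.log_one]
  · rw [bdiv, Real.logb, Real.logb,
      Real.log_div (ne_of_gt hzpos) (ne_of_gt hq0),
      Real.log_div (by linarith : (1:ℝ) - z ≠ 0) (by linarith : (1:ℝ) - q ≠ 0)]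
    ring

/-- Convexity of `bdiv · q` on `[0,1]`. -/
lemma my_bdiv_convex {q : ℝ} (hq0 : 0 < q) (hq1 : q < 1) {x y lam mu : ℝ}
    (hx0 : 0 ≤ x) (hx1 : x ≤ 1) (hy0 : 0 ≤ y) (hy1 : y ≤ 1)
    (hlam : 0 ≤ lam) (hmu : 0 ≤ mu) (hlm : lam + mu = 1) :
    bdiv (lam * x + mu * y) q ≤ lam * bdiv x q + mu * bdiv y q := by
  have hlog2 : (0:ℝ) < Real.log 2 := Real.log_pos (by norm_num)
  have hz0 : 0 ≤ lam * x + mu * y := by positivity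
  have hz1 : lam * x + mu * y ≤ 1 := by nlinarith
  have hg := Real.convexOn_mul_log.2 (Set.mem_Ici.2 hx0) (Set.mem_Ici.2 hy0) hlam hmu hlm
  have hg' := Real.convexOn_mul_log.2 (Set.mem_Ici.2 (by linarith : (0:ℝ) ≤ 1 - x))
    (Set.mem_Ici.2 (by linarith : (0:ℝ) ≤ 1 - y)) hlam hmu hlm
  simp only [smul_eq_mul] at hg hg'
  have hcompl : lam * (1 - x) + mu * (1 - y) = 1 - (lam * x + mu * y) := by
    nlinarith [hlm]
  rw [hcompl] at hg'
  rw [my_bdiv_eq hq0 hq1 hz0 hz1, my_bdiv_eq hq0 hq1 hx0 hx1, my_bdiv_eq hq0 hq1 hy0 hy1]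
  rw [div_le_iff₀ hlog2]
  have e : (lam * ((x * Real.log x + (1 - x) * Real.log (1 - x)
      - x * Real.log q - (1 - x) * Real.log (1 - q)) / Real.log 2)
      + mu * ((y * Real.log y + (1 - y) * Real.log (1 - y)
      - y * Real.log q - (1 - y) * Real.log (1 - q)) / Real.log 2)) * Real.log 2
      = lam * (x * Real.log x + (1 - x) * Real.log (1 - x))
      + mu * (y * Real.log y + (1 - y) * Real.log (1 - y))
      - (lam * x + mu * y) * Real.log q
      - (lam * (1 - x) + mu * (1 - y)) * Real.log (1 - q) := by
    field_simp
    ring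
  rw [e, hcompl]
  nlinarith [hg, hg']

/-- Monotonicity of `bdiv · q` above `q`. -/
lemma my_bdiv_mono {q b a : ℝ} (hq0 : 0 < q) (hq1 : q < 1) (hqb : q ≤ b)
    (hba : b ≤ a) (ha1 : a ≤ 1) : bdiv b q ≤ bdiv a q := by
  rcases eq_or_lt_of_le (hqb.trans hba) with h | haq
  · -- a = q hence b = q
    have hb : b = q := le_antisymm (by linarith) hqb
    rw [hb, ← h]
  · set lam := (a - b) / (a - q) with hlam
    set mu := (b - q) / (a - q) with hmu
    have hden : 0 < a - q := by linarith
    have hl0 : 0 ≤ lam := div_nonneg (by linarith) hden.le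
    have hm0 : 0 ≤ mu := div_nonneg (by linarith) hden.le
    have hlm : lam + mu = 1 := by
      rw [hlam, hmu, ← add_div]
      rw [show a - b + (b - q) = a - q by ring, div_self hden.ne']
    have hcomb : lam * q + mu * a = b := by
      rw [hlam, hmu, div_mul_eq_mul_div, div_mul_eq_mul_div, ← add_div,
        div_eq_iff hden.ne']
      ring
    have h := my_bdiv_convex hq0 hq1 hq0.le hq1.le (by linarith : (0:ℝ) ≤ a)
      ha1 hl0 hm0 hlm
    rw [hcomb, my_bdiv_self hq0, mul_zero, zero_add] at h
    have hmu1 : mu ≤ 1 := by linarith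
    have hnn : 0 ≤ bdiv a q := my_bdiv_nonneg (by linarith) ha1 hq0 (by linarith)
      (fun hc => by linarith)
    nlinarith

lemma my_marg_isPMF {X Y : Type*} [Fintype X] [Fintype Y] (p : X → ℝ) (K : X → Y → ℝ)
    (hp : isPMF p) (hK : ∀ x, isPMF (K x)) : isPMF (marg p K) := by
  constructor
  · intro y
    exact Finset.sum_nonneg fun x _ => mul_nonneg (hp.1 x) ((hK x).1 y)
  · show (∑ y, ∑ x, p x * K x y) = 1
    rw [Finset.sum_comm]
    calc (∑ x, ∑ y, p x * K x y) = ∑ x, p x := by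
          refine Finset.sum_congr rfl fun x _ => ?_
          rw [← Finset.mul_sum, (hK x).2, mul_one]
      _ = 1 := hp.2

/-- Golden formula bound: `I(X;Y) ≤ E_X[D(K(X)‖Q)]` for any pmf `Q` with
`K x ≪ Q` on the support of `p`. -/
lemma my_golden {X Y : Type*} [Fintype X] [Fintype Y] (p : X → ℝ) (K : X → Y → ℝ)
    (Q : Y → ℝ) (hp : isPMF p) (hK : ∀ x, isPMF (K x)) (hQ : isPMF Q)
    (hac : ∀ x y, 0 < p x → Q y = 0 → K x y = 0) :
    mutInfo p K ≤ ∑ x, p x * klDiv (K x) Q := by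
  set M := marg p K with hM
  have hMpmf : isPMF M := my_marg_isPMF p K hp hK
  -- termwise rewriting of the difference
  have key : ∀ x y, p x * (K x y * Real.logb 2 (K x y / Q y))
      - p x * (K x y * Real.logb 2 (K x y / M y))
      = p x * K x y * Real.logb 2 (M y / Q y) := by
    intro x y
    rcases (hp.1 x).eq_or_lt with hpx | hpx
    · rw [← hpx]; ring
    rcases ((hK x).1 y).eq_or_lt with hk | hk
    · rw [← hk]; ring
    have hQy : 0 < Q y := by
      rcases (hQ.1 y).eq_or_lt with h | h
      · exact absurd (hac x y hpx h.symm) (ne_of_gt hk)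
      · exact h
    have hMy : 0 < M y := by
      have hle : p x * K x y ≤ M y := by
        show p x * K x y ≤ ∑ x', p x' * K x' y
        exact Finset.single_le_sum (f := fun x' => p x' * K x' y)
          (fun x' _ => mul_nonneg (hp.1 x') ((hK x').1 y)) (Finset.mem_univ x)
      nlinarith
    rw [Real.logb, Real.logb, Real.logb,
      Real.log_div (ne_of_gt hk) (ne_of_gt hQy),
      Real.log_div (ne_of_gt hk) (ne_of_gt hMy),
      Real.log_div (ne_of_gt hMy) (ne_of_gt hQy)]
    ring
  -- sum the difference
  have hdiff : (∑ x, p x * klDiv (K x) Q) - mutInfo p K = klDiv M Q := by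
    rw [mutInfo, ← hM, klDiv]
    have e1 : (∑ x, p x * klDiv (K x) Q) - (∑ x, p x * klDiv (K x) M)
        = ∑ x, ∑ y, p x * K x y * Real.logb 2 (M y / Q y) := by
      rw [← Finset.sum_sub_distrib]
      refine Finset.sum_congr rfl fun x _ => ?_
      rw [klDiv, klDiv, Finset.mul_sum, Finset.mul_sum, ← Finset.sum_sub_distrib]
      exact Finset.sum_congr rfl fun y _ => key x y
    rw [e1, Finset.sum_comm]
    refine Finset.sum_congr rfl fun y _ => ?_
    rw [← Finset.sum_mul]
    congr 1
  have hklMQ : 0 ≤ klDiv M Q := by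
    refine my_klDiv_nonneg M Q hMpmf hQ ?_
    intro y hQy
    by_contra hMy
    have h0 : 0 < M y := lt_of_le_of_ne (hMpmf.1 y) (Ne.symm hMy)
    replace h0 : 0 < ∑ x, p x * K x y := h0
    obtain ⟨x, _, hx⟩ := Finset.exists_lt_of_sum_lt (f := fun _ => (0:ℝ))
      (by simpa using h0)
    have hpx : 0 < p x := by
      rcases (hp.1 x).eq_or_lt with h | h
      · rw [← h] at hx; simp at hx
      · exact h
    have hKxy : 0 < K x y := by
      rcases ((hK x).1 y).eq_or_lt with h | h
      · rw [← h] at hx; simp at hx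
      · exact h
    have := hac x y hpx hQy
    linarith
  linarith

/-- The conditional-tilting construction: properties of the row
`μ y = α Q(y)/q` on the ball, `(1-α)Q(y)/(1-q)` off the ball. -/
lemma my_construct {X Y : Type*} [Fintype Y] (Q : Y → ℝ) (hQ : isPMF Q)
    (df : X → Y → ℝ) (D : ℝ) (x : X) {α : ℝ} (μ : Y → ℝ)
    (hqα : probBall Q df D x ≤ α) (hα1 : α ≤ 1) (hq0 : 0 < probBall Q df D x)
    (hμ : μ = fun y => if df x y ≤ D then α * Q y / probBall Q df D x
      else (1 - α) * Q y / (1 - probBall Q df D x)) :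
    isPMF μ ∧ probBall μ df D x = α ∧ klDiv μ Q = bdiv α (probBall Q df D x) ∧
      (∀ y, Q y = 0 → μ y = 0) := by
  set q := probBall Q df D x with hqdef
  have hα0 : 0 < α := lt_of_lt_of_le hq0 hqα
  have hq1 : q ≤ 1 := probBall_le_one Q hQ df D x
  set s₁ := Finset.univ.filter (fun y => df x y ≤ D) with hs₁
  set s₂ := Finset.univ.filter (fun y => ¬ df x y ≤ D) with hs₂
  have hq_eq : ∑ y ∈ s₁, Q y = q := (probBall_eq_sum Q df D x).symm
  have hq2 : ∑ y ∈ s₂, Q y = 1 - q := by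
    have := Finset.sum_filter_add_sum_filter_not Finset.univ (fun y => df x y ≤ D) Q
    rw [← hs₁, ← hs₂] at this
    rw [hQ.2] at this
    linarith [hq_eq]
  have hmem1 : ∀ y ∈ s₁, df x y ≤ D := fun y hy => (Finset.mem_filter.1 hy).2
  have hmem2 : ∀ y ∈ s₂, ¬ df x y ≤ D := fun y hy => (Finset.mem_filter.1 hy).2
  have hs1sum : ∑ y ∈ s₁, μ y = α := by
    have e : ∀ y ∈ s₁, μ y = α / q * Q y := by
      intro y hy
      rw [hμ]
      simp only [if_pos (hmem1 y hy)]
      ring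
    rw [Finset.sum_congr rfl e, ← Finset.mul_sum, hq_eq, div_mul_cancel₀ _ (ne_of_gt hq0)]
  have hs2sum : ∑ y ∈ s₂, μ y = 1 - α := by
    rcases eq_or_lt_of_le hq1 with hq1' | hqlt
    · -- q = 1, hence α = 1 and all off-ball Q-mass is 0
      have hα : α = 1 := le_antisymm hα1 (by rw [← hq1']; exact hqα)
      have e : ∀ y ∈ s₂, μ y = 0 := by
        intro y hy
        rw [hμ]
        simp only [if_neg (hmem2 y hy), hα]
        simp
      rw [Finset.sum_congr rfl e]
      simp [hα]
    · have e : ∀ y ∈ s₂, μ y = (1 - α) / (1 - q) * Q y := by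
        intro y hy
        rw [hμ]
        simp only [if_neg (hmem2 y hy)]
        ring
      rw [Finset.sum_congr rfl e, ← Finset.mul_sum, hq2,
        div_mul_cancel₀ _ (by linarith : (1:ℝ) - q ≠ 0)]
  have hμnn : ∀ y, 0 ≤ μ y := by
    intro y
    rw [hμ]
    by_cases h : df x y ≤ D
    · simp only [if_pos h]
      exact div_nonneg (mul_nonneg hα0.le (hQ.1 y)) hq0.le
    · simp only [if_neg h]
      exact div_nonneg (mul_nonneg (by linarith) (hQ.1 y)) (by linarith)
  have hμpmf : isPMF μ := by
    constructor
    · exact hμnn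
    · have := Finset.sum_filter_add_sum_filter_not Finset.univ (fun y => df x y ≤ D) μ
      rw [← hs₁, ← hs₂] at this
      rw [← this, hs1sum, hs2sum]
      ring
  have hball : probBall μ df D x = α := by
    rw [probBall_eq_sum, ← hs₁, hs1sum]
  have hkl : klDiv μ Q = bdiv α q := by
    have hsplit : klDiv μ Q = (∑ y ∈ s₁, μ y * Real.logb 2 (μ y / Q y)) +
        (∑ y ∈ s₂, μ y * Real.logb 2 (μ y / Q y)) := by
      rw [klDiv, hs₁, hs₂, Finset.sum_filter_add_sum_filter_not]
    have h₁ : ∑ y ∈ s₁, μ y * Real.logb 2 (μ y / Q y) = α * Real.logb 2 (α / q) := by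
      have e : ∀ y ∈ s₁, μ y * Real.logb 2 (μ y / Q y)
          = (α / q * Q y) * Real.logb 2 (α / q) := by
        intro y hy
        rcases (hQ.1 y).eq_or_lt with hQy | hQy
        · rw [hμ]
          simp only [if_pos (hmem1 y hy), ← hQy]
          simp
        · have hμy : μ y = α / q * Q y := by
            rw [hμ]; simp only [if_pos (hmem1 y hy)]; ring
          have hrat : μ y / Q y = α / q := by
            rw [hμy, mul_div_assoc, div_self (ne_of_gt hQy), mul_one]
          rw [hrat, hμy]
      rw [Finset.sum_congr rfl e, ← Finset.sum_mul, ← Finset.mul_sum, hq_eq,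
        div_mul_cancel₀ _ (ne_of_gt hq0)]
    have h₂ : ∑ y ∈ s₂, μ y * Real.logb 2 (μ y / Q y)
        = (1 - α) * Real.logb 2 ((1 - α) / (1 - q)) := by
      rcases eq_or_lt_of_le hq1 with hq1' | hqlt
      · have hα : α = 1 := le_antisymm hα1 (by rw [← hq1']; exact hqα)
        have e : ∀ y ∈ s₂, μ y * Real.logb 2 (μ y / Q y) = 0 := by
          intro y hy
          rw [hμ]
          simp only [if_neg (hmem2 y hy), hα]
          simp
        rw [Finset.sum_congr rfl e]
        simp [hα]
      · have e : ∀ y ∈ s₂, μ y * Real.logb 2 (μ y / Q y)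
            = ((1 - α) / (1 - q) * Q y) * Real.logb 2 ((1 - α) / (1 - q)) := by
          intro y hy
          rcases (hQ.1 y).eq_or_lt with hQy | hQy
          · rw [hμ]
            simp only [if_neg (hmem2 y hy), ← hQy]
            simp
          · have hμy : μ y = (1 - α) / (1 - q) * Q y := by
              rw [hμ]; simp only [if_neg (hmem2 y hy)]; ring
            have hrat : μ y / Q y = (1 - α) / (1 - q) := by
              rw [hμy, mul_div_assoc, div_self (ne_of_gt hQy), mul_one]
            rw [hrat, hμy]
        rw [Finset.sum_congr rfl e, ← Finset.sum_mul, ← Finset.mul_sum, hq2,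
          div_mul_cancel₀ _ (by linarith : (1:ℝ) - q ≠ 0)]
    rw [hsplit, h₁, h₂, bdiv]
  have hacc : ∀ y, Q y = 0 → μ y = 0 := by
    intro y hQy
    rw [hμ]
    by_cases h : df x y ≤ D <;> simp [h, hQy]
  exact ⟨hμpmf, hball, hkl, hacc⟩

/-- If the `ν`-ball has full mass and `μ ≪ ν`, the `μ`-ball has full mass. -/
lemma my_ball_full {X Y : Type*} [Fintype Y] (μ ν : Y → ℝ) (hμ : isPMF μ) (hν : isPMF ν)
    (hac : ∀ y, ν y = 0 → μ y = 0) (df : X → Y → ℝ) (D : ℝ) (x : X)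
    (h : probBall ν df D x = 1) : probBall μ df D x = 1 := by
  set s₁ := Finset.univ.filter (fun y => df x y ≤ D) with hs₁
  set s₂ := Finset.univ.filter (fun y => ¬ df x y ≤ D) with hs₂
  have hνsplit := Finset.sum_filter_add_sum_filter_not Finset.univ (fun y => df x y ≤ D) ν
  have hμsplit := Finset.sum_filter_add_sum_filter_not Finset.univ (fun y => df x y ≤ D) μ
  rw [← hs₁, ← hs₂, hν.2] at hνsplit
  rw [← hs₁, ← hs₂, hμ.2] at hμsplit
  have hν1 : ∑ y ∈ s₁, ν y = 1 := by rw [← probBall_eq_sum] at *; rw [← h]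
  have hν2 : ∑ y ∈ s₂, ν y = 0 := by linarith
  have hz : ∀ y ∈ s₂, ν y = 0 :=
    (Finset.sum_eq_zero_iff_of_nonneg (fun y _ => hν.1 y)).1 hν2
  have hμ2 : ∑ y ∈ s₂, μ y = 0 :=
    Finset.sum_eq_zero fun y hy => hac y (hz y hy)
  rw [probBall_eq_sum, ← hs₁]
  linarith

/-- conditional excess-distortion identity `R_X^c(d,ε) = R_X^{c,+}(d,ε)`:
the infimum of `I(X;Y)` over kernels with `P(d(X,Y) > D | X = x) ≤ ε` on the support
of `p` equals the infimum over output pmfs `Q` of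
`E[ d(α_Q(X) ‖ Q(B_D(X))) ]` with `α_Q(x) = max (1-ε) (Q(B_D(x)))`. -/
theorem cond_excess_mutual_info_identity {X Y : Type*} [Fintype X] [Fintype Y] [Nonempty Y]
    (p : X → ℝ) (df : X → Y → ℝ) (D ε : ℝ) (hε0 : 0 < ε) (hε1 : ε < 1)
    (hp : isPMF p) (hball : ∀ x, 0 < p x → ∃ y, df x y ≤ D) :
    sInf {r : ℝ | ∃ K : X → Y → ℝ, (∀ x, isPMF (K x)) ∧
        (∀ x, 0 < p x → 1 - ε ≤ probBall (K x) df D x) ∧ r = mutInfo p K} =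
    sInf {r : ℝ | ∃ Q : Y → ℝ, isPMF Q ∧ (∀ x, 0 < p x → 0 < probBall Q df D x) ∧
        r = ∑ x, p x *
          bdiv (max (1 - ε) (probBall Q df D x)) (probBall Q df D x)} := by
  classical
  obtain ⟨hp0, hp1⟩ := hp
  set S1 := {r : ℝ | ∃ K : X → Y → ℝ, (∀ x, isPMF (K x)) ∧
      (∀ x, 0 < p x → 1 - ε ≤ probBall (K x) df D x) ∧ r = mutInfo p K} with hS1def
  set S2 := {r : ℝ | ∃ Q : Y → ℝ, isPMF Q ∧ (∀ x, 0 < p x → 0 < probBall Q df D x) ∧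
      r = ∑ x, p x *
        bdiv (max (1 - ε) (probBall Q df D x)) (probBall Q df D x)} with hS2def
  -- absolute continuity of rows w.r.t. the marginal
  have habs : ∀ (K : X → Y → ℝ), (∀ x, isPMF (K x)) →
      ∀ x y, 0 < p x → marg p K y = 0 → K x y = 0 := by
    intro K hK x y hpx h0
    have h := (Finset.sum_eq_zero_iff_of_nonneg
      (fun x' _ => mul_nonneg (hp0 x') ((hK x').1 y))).1 h0 x (Finset.mem_univ x)
    rcases mul_eq_zero.1 h with h | h
    · exact absurd h (ne_of_gt hpx)
    · exact h
  -- both sets are bounded below by 0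
  have hS1lb : ∀ r ∈ S1, (0:ℝ) ≤ r := by
    rintro r ⟨K, hK, hfeas, rfl⟩
    refine Finset.sum_nonneg fun x _ => ?_
    rcases (hp0 x).eq_or_lt with h | hpx
    · rw [← h, zero_mul]
    · exact mul_nonneg (hp0 x) (my_klDiv_nonneg (K x) (marg p K) (hK x)
        (my_marg_isPMF p K ⟨hp0, hp1⟩ hK) (fun y h0 => habs K hK x y hpx h0))
  have hS2lb : ∀ r ∈ S2, (0:ℝ) ≤ r := by
    rintro r ⟨Q, hQ, hpos, rfl⟩
    refine Finset.sum_nonneg fun x _ => ?_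
    rcases (hp0 x).eq_or_lt with h | hpx
    · rw [← h, zero_mul]
    · have hq0 := hpos x hpx
      have hq1 := probBall_le_one Q hQ df D x
      refine mul_nonneg (hp0 x) (my_bdiv_nonneg ?_ ?_ hq0 hq1 ?_)
      · exact le_trans (by linarith) (le_max_left _ _)
      · exact max_le (by linarith) hq1
      · intro h1
        rw [h1]
        exact max_eq_right (by linarith)
  -- nonemptiness of S1 (deterministic kernel into the ball)
  have hf : ∀ x, ∃ y : Y, 0 < p x → df x y ≤ D := by
    intro x
    by_cases h : 0 < p x
    · exact (hball x h).imp fun y hy _ => hy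
    · exact ⟨Classical.arbitrary Y, fun hc => absurd hc h⟩
  choose f hfs using hf
  have hS1ne : S1.Nonempty := by
    set K0 : X → Y → ℝ := fun x y => if y = f x then 1 else 0 with hK0def
    have hK0 : ∀ x, isPMF (K0 x) := by
      intro x
      constructor
      · intro y; rw [hK0def]; dsimp only; split <;> norm_num
      · rw [hK0def]; simp
    have hfeas0 : ∀ x, 0 < p x → 1 - ε ≤ probBall (K0 x) df D x := by
      intro x hpx
      have h1 : (if df x (f x) ≤ D then K0 x (f x) else 0) ≤ probBall (K0 x) df D x := by
        rw [probBall]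
        refine Finset.single_le_sum (f := fun y => if df x y ≤ D then K0 x y else 0)
          (fun y _ => ?_) (Finset.mem_univ (f x))
        show (0:ℝ) ≤ if df x y ≤ D then K0 x y else 0
        split
        · exact (hK0 x).1 y
        · exact le_refl 0
      rw [if_pos (hfs x hpx)] at h1
      have h2 : K0 x (f x) = 1 := by rw [hK0def]; simp
      rw [h2] at h1
      linarith
    exact ⟨mutInfo p K0, K0, hK0, hfeas0, rfl⟩
  -- nonemptiness of S2 (uniform output distribution)
  have hS2ne : S2.Nonempty := by
    set Qu : Y → ℝ := fun _ => (Fintype.card Y : ℝ)⁻¹ with hQudef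
    have hcard : (0:ℝ) < Fintype.card Y := by
      exact_mod_cast Fintype.card_pos
    have hQu : isPMF Qu := by
      constructor
      · intro y; rw [hQudef]; positivity
      · rw [hQudef]
        simp [Finset.sum_const, Finset.card_univ]
    have hpos : ∀ x, 0 < p x → 0 < probBall Qu df D x := by
      intro x hpx
      obtain ⟨y, hy⟩ := hball x hpx
      rw [probBall]
      refine Finset.sum_pos' (fun z _ => ?_) ⟨y, Finset.mem_univ y, ?_⟩
      · split
        · exact le_of_lt (by rw [hQudef]; positivity)
        · exact le_refl 0
      · rw [if_pos hy, hQudef]; positivity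
    exact ⟨_, Qu, hQu, hpos, rfl⟩
  -- converse direction: every point of S1 is dominated by a point of S2
  have key1 : ∀ r ∈ S1, ∃ s ∈ S2, s ≤ r := by
    rintro r ⟨K, hK, hfeas, rfl⟩
    set Q := marg p K with hQdef
    have hQpmf : isPMF Q := my_marg_isPMF p K ⟨hp0, hp1⟩ hK
    have hac : ∀ x y, 0 < p x → Q y = 0 → K x y = 0 := habs K hK
    have hswap : ∀ x : X, probBall Q df D x = ∑ x', p x' * probBall (K x') df D x := by
      intro x
      rw [probBall]
      have e : ∀ y : Y, (if df x y ≤ D then Q y else 0)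
          = ∑ x', (if df x y ≤ D then p x' * K x' y else 0) := by
        intro y
        by_cases h : df x y ≤ D
        · simp only [if_pos h]; rfl
        · simp only [if_neg h, Finset.sum_const_zero]
      rw [Finset.sum_congr rfl (fun y _ => e y), Finset.sum_comm]
      refine Finset.sum_congr rfl fun x' _ => ?_
      rw [probBall, Finset.mul_sum]
      refine Finset.sum_congr rfl fun y _ => ?_
      by_cases h : df x y ≤ D <;> simp [h]
    have hqpos : ∀ x, 0 < p x → 0 < probBall Q df D x := by
      intro x hpx
      have h1 : p x * probBall (K x) df D x ≤ ∑ x', p x' * probBall (K x') df D x :=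
        Finset.single_le_sum (f := fun x' => p x' * probBall (K x') df D x)
          (fun x' _ => mul_nonneg (hp0 x') (probBall_nonneg (K x') (hK x').1 df D x))
          (Finset.mem_univ x)
      rw [← hswap x] at h1
      have h2 := hfeas x hpx
      nlinarith
    refine ⟨∑ x, p x * bdiv (max (1 - ε) (probBall Q df D x)) (probBall Q df D x),
      ⟨Q, hQpmf, hqpos, rfl⟩, ?_⟩
    rw [mutInfo]
    refine Finset.sum_le_sum fun x _ => ?_
    rcases (hp0 x).eq_or_lt with h | hpx
    · rw [← h, zero_mul, zero_mul]
    · have hacx : ∀ y, Q y = 0 → K x y = 0 := fun y => hac x y hpx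
      have hkb := my_klDiv_ge_bdiv (K x) Q (hK x) hQpmf hacx df D x
      have hq0 := hqpos x hpx
      have hq1 := probBall_le_one Q hQpmf df D x
      have hax1 := probBall_le_one (K x) (hK x) df D x
      have hax0 : 1 - ε ≤ probBall (K x) df D x := hfeas x hpx
      have hmono : bdiv (max (1 - ε) (probBall Q df D x)) (probBall Q df D x)
          ≤ bdiv (probBall (K x) df D x) (probBall Q df D x) := by
        rcases le_or_gt (1 - ε) (probBall Q df D x) with hcase | hcase
        · rw [max_eq_right hcase, my_bdiv_self hq0]
          refine my_bdiv_nonneg (by linarith) hax1 hq0 hq1 ?_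
          intro hq1'
          exact my_ball_full (K x) Q (hK x) hQpmf hacx df D x hq1'
        · rw [max_eq_left hcase.le]
          exact my_bdiv_mono hq0 (by linarith) hcase.le hax0 hax1
      exact mul_le_mul_of_nonneg_left (hmono.trans hkb) (hp0 x)
  -- achievability direction: every point of S2 is dominated by a point of S1
  have key2 : ∀ s ∈ S2, ∃ r ∈ S1, r ≤ s := by
    rintro s ⟨Q, hQ, hpos, rfl⟩
    set K : X → Y → ℝ := fun x y => if 0 < p x then
        (if df x y ≤ D then max (1 - ε) (probBall Q df D x) * Q y / probBall Q df D x
          else (1 - max (1 - ε) (probBall Q df D x)) * Q y / (1 - probBall Q df D x))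
        else Q y with hKdef
    have hcon : ∀ x, 0 < p x → isPMF (K x) ∧
        probBall (K x) df D x = max (1 - ε) (probBall Q df D x) ∧
        klDiv (K x) Q = bdiv (max (1 - ε) (probBall Q df D x)) (probBall Q df D x) ∧
        (∀ y, Q y = 0 → K x y = 0) := by
      intro x hpx
      refine my_construct Q hQ df D x (K x) (le_max_right _ _)
        (max_le (by linarith) (probBall_le_one Q hQ df D x)) (hpos x hpx) ?_
      funext y
      rw [hKdef]
      simp only [if_pos hpx]
    have hKpmf : ∀ x, isPMF (K x) := by
      intro x
      by_cases hpx : 0 < p x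
      · exact (hcon x hpx).1
      · have hKx : K x = Q := by
          funext y; rw [hKdef]; simp only [if_neg hpx]
        rw [hKx]; exact hQ
    refine ⟨mutInfo p K, ⟨K, hKpmf, fun x hpx => ?_, rfl⟩, ?_⟩
    · rw [(hcon x hpx).2.1]; exact le_max_left _ _
    · calc mutInfo p K ≤ ∑ x, p x * klDiv (K x) Q :=
            my_golden p K Q ⟨hp0, hp1⟩ hKpmf hQ (fun x y hpx => (hcon x hpx).2.2.2 y)
        _ = ∑ x, p x * bdiv (max (1 - ε) (probBall Q df D x)) (probBall Q df D x) := by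
            refine Finset.sum_congr rfl fun x _ => ?_
            rcases (hp0 x).eq_or_lt with h | hpx
            · rw [← h, zero_mul, zero_mul]
            · rw [(hcon x hpx).2.2.1]
  -- combine
  apply le_antisymm
  · refine le_csInf hS2ne ?_
    intro s hs
    obtain ⟨r, hr, hle⟩ := key2 s hs
    exact le_trans (csInf_le ⟨0, hS1lb⟩ hr) hle
  · refine le_csInf hS1ne ?_
    intro r hr
    obtain ⟨s, hs, hle⟩ := key1 r hr
    exact le_trans (csInf_le ⟨0, hS2lb⟩ hs) hle
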